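/- Hardy–Littlewood–Pólya theorem: For probability vectors x, y in ℝ^n, x is majorized by y if and only if there exists a doubly stochastic n×n matrix D such that x = D y. -/

import Mathlib

open Finset Matrix

noncomputable def pMax {n : ℕ} (x : Fin n → ℝ) (k : ℕ) : ℝ :=
  sSup {s : ℝ | ∃ I : Finset (Fin n), I.card = k ∧ s = ∑ i ∈ I, x i}

def Maj {n : ℕ} (x y : Fin n → ℝ) : Prop :=
  (∀ k ≤ n, pMax x k ≤ pMax y k) ∧ (∑ i, x i = ∑ i, y i)

def ProbVec {n : ℕ} (p : Fin n → ℝ) : Prop :=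
  (∀ i, 0 ≤ p i) ∧ ∑ i, p i = 1

/-- A doubly stochastic matrix: nonnegative entries, all row and column sums equal 1. -/
def DoublyStochastic {n : ℕ} (D : Matrix (Fin n) (Fin n) ℝ) : Prop :=
  (∀ i j, 0 ≤ D i j) ∧ (∀ i, ∑ j, D i j = 1) ∧ (∀ j, ∑ i, D i j = 1)


lemma pMax_set_eq {n : ℕ} (x : Fin n → ℝ) (k : ℕ) :
    {s : ℝ | ∃ I : Finset (Fin n), I.card = k ∧ s = ∑ i ∈ I, x i} =
    ↑(((univ : Finset (Fin n)).powersetCard k).image fun I => ∑ i ∈ I, x i) := by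
  ext s
  simp only [Set.mem_setOf_eq, coe_image, Set.mem_image, mem_coe, mem_powersetCard,
    subset_univ, true_and]
  constructor
  · rintro ⟨I, hI, rfl⟩; exact ⟨I, hI, rfl⟩
  · rintro ⟨I, hI, rfl⟩; exact ⟨I, hI, rfl⟩

lemma le_pMax {n : ℕ} (x : Fin n → ℝ) {k : ℕ} (I : Finset (Fin n)) (hI : I.card = k) :
    ∑ i ∈ I, x i ≤ pMax x k := by
  rw [pMax, pMax_set_eq]
  refine le_csSup (Finset.bddAbove _) ?_
  simp only [coe_image, Set.mem_image, mem_coe, mem_powersetCard, subset_univ, true_and]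
  exact ⟨I, hI, rfl⟩

lemma pMax_attained {n : ℕ} (x : Fin n → ℝ) {k : ℕ} (hk : k ≤ n) :
    ∃ I : Finset (Fin n), I.card = k ∧ pMax x k = ∑ i ∈ I, x i := by
  have hne : (((univ : Finset (Fin n)).powersetCard k).image fun I => ∑ i ∈ I, x i).Nonempty := by
    refine Finset.Nonempty.image ?_ _
    rw [Finset.powersetCard_nonempty]
    simpa using hk
  rw [pMax, pMax_set_eq, hne.csSup_eq_max']
  have hmem := Finset.max'_mem _ hne
  simp only [mem_image, mem_powersetCard, subset_univ, true_and] at hmem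
  obtain ⟨I, hI, hsum⟩ := hmem
  exact ⟨I, hI, hsum.symm⟩

lemma weighted_le_pMax {n : ℕ} (y : Fin n → ℝ) {k : ℕ} (hk : k ≤ n) (c : Fin n → ℝ)
    (hc0 : ∀ j, 0 ≤ c j) (hc1 : ∀ j, c j ≤ 1) (hcs : ∑ j, c j = (k : ℝ)) :
    ∑ j, c j * y j ≤ pMax y k := by
  obtain ⟨J, hJcard, hJsum⟩ := pMax_attained y hk
  rcases Nat.eq_zero_or_pos k with rfl | hkpos
  · have hc : ∀ j ∈ (univ : Finset (Fin n)), c j = 0 := by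
      rw [← Finset.sum_eq_zero_iff_of_nonneg (fun j _ => hc0 j)]
      simpa using hcs
    have h0 : ∑ j, c j * y j = 0 :=
      Finset.sum_eq_zero fun j hj => by rw [hc j hj, zero_mul]
    rw [h0, hJsum, Finset.card_eq_zero.mp hJcard, Finset.sum_empty]
  · -- J is nonempty; let t be the minimum value of y on J
    have hJne : J.Nonempty := Finset.card_pos.mp (hJcard ▸ hkpos)
    obtain ⟨a₀, ha₀J, ha₀min⟩ := Finset.exists_min_image J y hJne
    set t : ℝ := y a₀ with ht
    -- every element outside J has y value ≤ t
    have hout : ∀ b, b ∉ J → y b ≤ t := by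
      intro b hb
      have hins : (insert b (J.erase a₀)).card = k := by
        rw [Finset.card_insert_of_notMem (fun h => hb (Finset.erase_subset _ _ h)),
          Finset.card_erase_of_mem ha₀J, hJcard]
        omega
      have hsum2 : ∑ i ∈ insert b (J.erase a₀), y i = y b + (∑ i ∈ J, y i - y a₀) := by
        rw [Finset.sum_insert (fun h => hb (Finset.erase_subset _ _ h)),
          Finset.sum_erase_eq_sub ha₀J]
      have := le_pMax y _ hins
      rw [hsum2, ← hJsum] at this
      linarith
    -- split the full sum over J and Jᶜ
    have hsplit : ∑ j ∈ J, c j * y j + ∑ j ∈ Jᶜ, c j * y j = ∑ j, c j * y j :=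
      Finset.sum_add_sum_compl J _
    have hA : ∑ j ∈ J, c j * y j ≤ ∑ j ∈ J, (y j + (c j - 1) * t) := by
      refine Finset.sum_le_sum fun j hj => ?_
      have h1 := ha₀min j hj
      have h2 := hc1 j
      nlinarith [mul_nonneg (sub_nonneg.mpr h2) (sub_nonneg.mpr h1)]
    have hB : ∑ j ∈ Jᶜ, c j * y j ≤ ∑ j ∈ Jᶜ, c j * t := by
      refine Finset.sum_le_sum fun j hj => ?_
      exact mul_le_mul_of_nonneg_left (hout j (by simpa using hj)) (hc0 j)
    have hcoef : ∑ j ∈ J, (c j - 1) + ∑ j ∈ Jᶜ, c j = 0 := by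
      have h1 : ∑ j ∈ J, c j + ∑ j ∈ Jᶜ, c j = ∑ j, c j := Finset.sum_add_sum_compl J c
      have h2 : ∑ j ∈ J, (c j - 1) = ∑ j ∈ J, c j - k := by
        rw [Finset.sum_sub_distrib, Finset.sum_const, hJcard]; simp
      rw [h2]; rw [hcs] at h1; linarith
    have hzero : ∑ j ∈ J, (c j - 1) * t + ∑ j ∈ Jᶜ, c j * t = 0 := by
      rw [← Finset.sum_mul, ← Finset.sum_mul, ← add_mul, hcoef, zero_mul]
    have : ∑ j, c j * y j ≤ ∑ j ∈ J, y j := by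
      rw [← hsplit]
      have := add_le_add hA hB
      rw [Finset.sum_add_distrib] at this
      linarith
    linarith [hJsum ▸ this]

lemma val_le_strictMono {k n : ℕ} (F : Fin k → Fin n) (hF : StrictMono F) (i : Fin k) :
    (i : ℕ) ≤ (F i : ℕ) := by
  obtain ⟨m, hm⟩ := i
  induction m with
  | zero => simp
  | succ m ih =>
    have hmk : m < k := by omega
    have h1 : F ⟨m, hmk⟩ < F ⟨m + 1, hm⟩ := hF (by simp [Fin.lt_def])
    have h2 := ih hmk
    simp only [Fin.lt_def] at h1
    have e1 : ((⟨m, hmk⟩ : Fin k) : ℕ) = m := rfl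
    have e2 : ((⟨m + 1, hm⟩ : Fin k) : ℕ) = m + 1 := rfl
    omega

/-- For an antitone `w`, the sum over any `k`-subset is at most the sum of the first `k`. -/
lemma sum_le_prefix {n : ℕ} (w : Fin n → ℝ) (hw : Antitone w) {k : ℕ} (hk : k ≤ n)
    (J : Finset (Fin n)) (hJ : J.card = k) :
    ∑ j ∈ J, w j ≤ ∑ i : Fin k, w (Fin.castLE hk i) := by
  have hemb : (univ : Finset (Fin k)).map (J.orderEmbOfFin hJ).toEmbedding = J := by
    apply Finset.eq_of_subset_of_card_le
    · intro j hj
      simp only [Finset.mem_map] at hj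
      obtain ⟨i, _, rfl⟩ := hj
      exact Finset.orderEmbOfFin_mem J hJ i
    · simp [hJ]
  rw [← hemb, Finset.sum_map]
  refine Finset.sum_le_sum fun i _ => ?_
  apply hw
  rw [Fin.le_def]
  exact val_le_strictMono _ (J.orderEmbOfFin hJ).strictMono i

lemma pMax_prefix {n : ℕ} (x w : Fin n → ℝ) (τ : Equiv.Perm (Fin n))
    (hwx : ∀ i, w i = x (τ i)) (hanti : Antitone w) {k : ℕ} (hk : k ≤ n) :
    pMax x k = ∑ i : Fin k, w (Fin.castLE hk i) := by
  apply le_antisymm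
  · obtain ⟨I, hIcard, hIsum⟩ := pMax_attained x hk
    rw [hIsum]
    have hmap : ∑ i ∈ I, x i = ∑ j ∈ I.map τ.symm.toEmbedding, w j := by
      rw [Finset.sum_map]
      exact Finset.sum_congr rfl fun i _ => by rw [hwx]; simp
    rw [hmap]
    exact sum_le_prefix w hanti hk _ (by simp [hIcard])
  · have hcard : ((univ : Finset (Fin k)).map
        ⟨fun i => τ (Fin.castLE hk i), fun a b hab => by
          have := τ.injective hab
          exact Fin.castLE_injective hk this⟩).card = k := by simp
    have := le_pMax x _ hcard
    rw [Finset.sum_map] at this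
    refine le_trans (le_of_eq ?_) this
    exact Finset.sum_congr rfl fun i _ => by rw [hwx]; rfl

lemma abel_ineq (n : ℕ) (b u v : ℕ → ℝ)
    (hb : ∀ i, i + 1 < n → b (i + 1) ≤ b i)
    (hle : ∀ k, k ≤ n → ∑ i ∈ range k, u i ≤ ∑ i ∈ range k, v i)
    (heq : ∑ i ∈ range n, u i = ∑ i ∈ range n, v i) :
    ∑ i ∈ range n, b i * u i ≤ ∑ i ∈ range n, b i * v i := by
  rcases Nat.eq_zero_or_pos n with rfl | hn
  · simp
  have h1 := Finset.sum_range_by_parts b u n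
  have h2 := Finset.sum_range_by_parts b v n
  simp only [smul_eq_mul] at h1 h2
  rw [h1, h2, heq]
  apply sub_le_sub_left
  refine Finset.sum_le_sum fun i hi => ?_
  have hi' : i + 1 < n := by
    have := Finset.mem_range.mp hi; omega
  have hbn : b (i + 1) - b i ≤ 0 := sub_nonpos.mpr (hb i hi')
  have hUV : ∑ j ∈ range (i + 1), u j ≤ ∑ j ∈ range (i + 1), v j := hle (i + 1) (by omega)
  nlinarith

lemma exists_antitone_perm {n : ℕ} (x : Fin n → ℝ) :
    ∃ τ : Equiv.Perm (Fin n), Antitone (x ∘ τ) := by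
  refine ⟨Tuple.sort (-x), fun i j hij => ?_⟩
  have := Tuple.monotone_sort (-x) hij
  simpa using this

lemma range_sum_ext {n : ℕ} (f : Fin n → ℝ) {k : ℕ} (hk : k ≤ n) :
    ∑ i ∈ Finset.range k, (if hm : i < n then f ⟨i, hm⟩ else 0) =
      ∑ i : Fin k, f (Fin.castLE hk i) := by
  rw [← Fin.sum_univ_eq_sum_range (fun i => if hm : i < n then f ⟨i, hm⟩ else 0) k]
  refine Finset.sum_congr rfl fun i _ => ?_
  rw [dif_pos (lt_of_lt_of_le i.isLt hk)]
  rfl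

lemma maj_dot_le {n : ℕ} (x y : Fin n → ℝ) (h : Maj x y) (a : Fin n → ℝ) :
    ∃ σ : Equiv.Perm (Fin n), ∑ j, a j * x j ≤ ∑ j, a j * y (σ j) := by
  obtain ⟨τa, hba⟩ := exists_antitone_perm a
  obtain ⟨τx, hwx⟩ := exists_antitone_perm x
  obtain ⟨τy, hzy⟩ := exists_antitone_perm y
  set b : Fin n → ℝ := a ∘ τa with hb
  set w : Fin n → ℝ := x ∘ τx with hw
  set z : Fin n → ℝ := y ∘ τy with hz
  have s1 : ∑ j, a j * x j = ∑ i, b i * x (τa i) :=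
    (Equiv.sum_comp τa (fun j => a j * x j)).symm
  have s3 : ∑ i, b i * x (τa i) ≤ ∑ i, b i * w i := by
    have s2 : ∀ i, x (τa i) = w ((τa.trans τx.symm) i) := fun i => by simp [hw]
    simp_rw [s2]
    exact (hba.monovary hwx).sum_mul_comp_perm_le_sum_mul (σ := τa.trans τx.symm)
  have s4 : ∑ i, b i * w i ≤ ∑ i, b i * z i := by
    set bb : ℕ → ℝ := fun m => if hm : m < n then b ⟨m, hm⟩ else 0 with hbb
    set uu : ℕ → ℝ := fun m => if hm : m < n then w ⟨m, hm⟩ else 0 with huu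
    set vv : ℕ → ℝ := fun m => if hm : m < n then z ⟨m, hm⟩ else 0 with hvv
    have habel := abel_ineq n bb uu vv
      (fun i hi => by
        rw [hbb]
        simp only
        rw [dif_pos hi, dif_pos (by omega : i < n)]
        exact hba (by simp [Fin.le_def]))
      (fun k hk => by
        rw [huu, hvv, range_sum_ext w hk, range_sum_ext z hk,
          ← pMax_prefix x w τx (fun i => rfl) hwx hk,
          ← pMax_prefix y z τy (fun i => rfl) hzy hk]
        exact h.1 k hk)
      (by
        rw [huu, hvv, range_sum_ext w le_rfl, range_sum_ext z le_rfl]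
        have e1 : ∑ i : Fin n, w (Fin.castLE le_rfl i) = ∑ i, x i := by
          rw [show (fun i => w (Fin.castLE le_rfl i)) = w from rfl]
          exact Equiv.sum_comp τx x
        have e2 : ∑ i : Fin n, z (Fin.castLE le_rfl i) = ∑ i, y i := by
          rw [show (fun i => z (Fin.castLE le_rfl i)) = z from rfl]
          exact Equiv.sum_comp τy y
        rw [e1, e2, h.2])
    have conv1 : ∑ i ∈ range n, bb i * uu i = ∑ i, b i * w i := by
      rw [← Fin.sum_univ_eq_sum_range (fun m => bb m * uu m) n]
      refine Finset.sum_congr rfl fun i _ => ?_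
      simp [hbb, huu, i.isLt]
    have conv2 : ∑ i ∈ range n, bb i * vv i = ∑ i, b i * z i := by
      rw [← Fin.sum_univ_eq_sum_range (fun m => bb m * vv m) n]
      refine Finset.sum_congr rfl fun i _ => ?_
      simp [hbb, hvv, i.isLt]
    rw [conv1, conv2] at habel
    exact habel
  have s5 : ∑ i, b i * z i = ∑ j, a j * y ((τa.symm.trans τy) j) := by
    rw [← Equiv.sum_comp τa (fun j => a j * y ((τa.symm.trans τy) j))]
    exact Finset.sum_congr rfl fun i _ => by simp [hb, hz]
  exact ⟨τa.symm.trans τy, by rw [s1, ← s5]; linarith⟩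

/-- The permutation matrix of `σ`. -/
def permMat {n : ℕ} (σ : Equiv.Perm (Fin n)) : Matrix (Fin n) (Fin n) ℝ :=
  Matrix.of fun i j => if j = σ i then 1 else 0

lemma permMat_nonneg {n : ℕ} (σ : Equiv.Perm (Fin n)) (i j : Fin n) : 0 ≤ permMat σ i j := by
  simp only [permMat, Matrix.of_apply]
  split <;> norm_num

lemma permMat_row {n : ℕ} (σ : Equiv.Perm (Fin n)) (i : Fin n) : ∑ j, permMat σ i j = 1 := by
  simp [permMat]

lemma permMat_col {n : ℕ} (σ : Equiv.Perm (Fin n)) (j : Fin n) : ∑ i, permMat σ i j = 1 := by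
  have h : ∀ i : Fin n, (j = σ i) ↔ (i = σ.symm j) := fun i => by
    constructor
    · intro h; rw [h]; simp
    · intro h; rw [h]; simp
  simp only [permMat, Matrix.of_apply]
  rw [Finset.sum_congr rfl (fun i _ => by rw [if_congr (h i) rfl rfl])]
  simp

lemma permMat_dot {n : ℕ} (σ : Equiv.Perm (Fin n)) (y : Fin n → ℝ) (i : Fin n) :
    ∑ j, permMat σ i j * y j = y (σ i) := by
  simp [permMat, ite_mul]


/-- Hardy–Littlewood–Pólya: for probability vectors `x`, `y`,
`x ≺ y` iff `x = D y` for some doubly stochastic matrix `D`. -/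
theorem hardy_littlewood_polya {n : ℕ} (x y : Fin n → ℝ)
    (hx : ProbVec x) (hy : ProbVec y) :
    Maj x y ↔ ∃ D : Matrix (Fin n) (Fin n) ℝ, DoublyStochastic D ∧ x = D.mulVec y := by
  constructor
  · intro h
    classical
    set t : Finset (Fin n → ℝ) := Finset.univ.image (fun σ : Equiv.Perm (Fin n) => y ∘ σ)
      with hts
    have hxhull : x ∈ convexHull ℝ (↑t : Set (Fin n → ℝ)) := by
      by_contra hxC
      have hconv := convex_convexHull ℝ (↑t : Set (Fin n → ℝ))
      have hclosed : IsClosed (convexHull ℝ (↑t : Set (Fin n → ℝ))) :=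
        (t.finite_toSet.isCompact_convexHull ℝ).isClosed
      obtain ⟨f, u, hfs, hfx⟩ := geometric_hahn_banach_closed_point hconv hclosed hxC
      set a : Fin n → ℝ := fun j => f (Pi.single j 1) with ha
      have key : ∀ z : Fin n → ℝ, f z = ∑ j, a j * z j := by
        intro z
        have hz : z = ∑ j, z j • (Pi.single j 1 : Fin n → ℝ) := by
          ext i
          rw [Finset.sum_apply]
          simp [Pi.single_apply]
        conv_lhs => rw [hz]
        rw [map_sum]
        simp [ha, mul_comm]
      obtain ⟨σ, hσ⟩ := maj_dot_le x y h a
      have hmem : (y ∘ σ) ∈ (↑t : Set (Fin n → ℝ)) := by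
        simp only [hts, coe_image, coe_univ, Set.image_univ, Set.mem_range]
        exact ⟨σ, rfl⟩
      have h1 : f (y ∘ σ) < u := hfs _ (subset_convexHull ℝ _ hmem)
      have h2 : f x ≤ f (y ∘ σ) := by
        rw [key, key]
        simpa using hσ
      linarith
    rw [Finset.mem_convexHull'] at hxhull
    obtain ⟨wgt, hw0, hw1, hwsum⟩ := hxhull
    have hPz : ∀ z ∈ t, ∃ σ : Equiv.Perm (Fin n), y ∘ σ = z := by
      intro z hz
      simp only [hts, mem_image, mem_univ, true_and] at hz
      exact hz
    choose! σof hσof using hPz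
    refine ⟨∑ z ∈ t, wgt z • permMat (σof z), ⟨?_, ?_, ?_⟩, ?_⟩
    · intro i j
      rw [Matrix.sum_apply]
      refine Finset.sum_nonneg fun z hz => ?_
      rw [Matrix.smul_apply, smul_eq_mul]
      exact mul_nonneg (hw0 z hz) (permMat_nonneg _ i j)
    · intro i
      have hap : ∀ j, (∑ z ∈ t, wgt z • permMat (σof z)) i j
          = ∑ z ∈ t, wgt z * permMat (σof z) i j := fun j => by
        rw [Matrix.sum_apply]
        simp
      simp_rw [hap]
      rw [Finset.sum_comm]
      calc ∑ z ∈ t, ∑ j, wgt z * permMat (σof z) i j = ∑ z ∈ t, wgt z := by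
            refine Finset.sum_congr rfl fun z hz => ?_
            rw [← Finset.mul_sum, permMat_row, mul_one]
        _ = 1 := hw1
    · intro j
      have hap : ∀ i, (∑ z ∈ t, wgt z • permMat (σof z)) i j
          = ∑ z ∈ t, wgt z * permMat (σof z) i j := fun i => by
        rw [Matrix.sum_apply]
        simp
      simp_rw [hap]
      rw [Finset.sum_comm]
      calc ∑ z ∈ t, ∑ i, wgt z * permMat (σof z) i j = ∑ z ∈ t, wgt z := by
            refine Finset.sum_congr rfl fun z hz => ?_
            rw [← Finset.mul_sum, permMat_col, mul_one]
        _ = 1 := hw1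
    · rw [← hwsum]
      funext i
      rw [Finset.sum_apply]
      simp only [Pi.smul_apply, smul_eq_mul]
      have hmv : (∑ z ∈ t, wgt z • permMat (σof z)).mulVec y i
          = ∑ j, (∑ z ∈ t, wgt z * permMat (σof z) i j) * y j := by
        simp only [Matrix.mulVec, dotProduct, Matrix.sum_apply, Matrix.smul_apply, smul_eq_mul]
      rw [hmv]
      have hswap : ∑ j, (∑ z ∈ t, wgt z * permMat (σof z) i j) * y j
          = ∑ z ∈ t, wgt z * ∑ j, permMat (σof z) i j * y j := by
        simp_rw [Finset.sum_mul, Finset.mul_sum]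
        rw [Finset.sum_comm]
        simp [mul_assoc]
      rw [hswap]
      refine (Finset.sum_congr rfl fun z hz => ?_).symm
      rw [permMat_dot]
      have := congrFun (hσof z hz) i
      simp only [Function.comp_apply] at this
      rw [this]
  · rintro ⟨D, ⟨hD0, hDrow, hDcol⟩, rfl⟩
    constructor
    · intro k hk
      obtain ⟨I, hIcard, hIsum⟩ := pMax_attained (D.mulVec y) hk
      rw [hIsum]
      have hrw : ∑ i ∈ I, D.mulVec y i = ∑ j, (∑ i ∈ I, D i j) * y j := by
        simp only [Matrix.mulVec, dotProduct]
        rw [Finset.sum_comm]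
        simp [Finset.sum_mul]
      rw [hrw]
      refine weighted_le_pMax y hk _ (fun j => Finset.sum_nonneg fun i _ => hD0 i j)
        (fun j => ?_) ?_
      · calc ∑ i ∈ I, D i j ≤ ∑ i, D i j :=
              Finset.sum_le_sum_of_subset_of_nonneg (Finset.subset_univ I)
                (fun i _ _ => hD0 i j)
          _ = 1 := hDcol j
      · rw [Finset.sum_comm]
        simp only [hDrow]
        simp [hIcard]
    · calc ∑ i, D.mulVec y i = ∑ j, (∑ i, D i j) * y j := by
            simp only [Matrix.mulVec, dotProduct]
            rw [Finset.sum_comm]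
            simp [Finset.sum_mul]
        _ = ∑ j, y j := by simp [hDcol]
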